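/- A power series Σ b_{i,j} x^i y^j in B[[x,y]] is G-invariant (i.e. annihilated by the action D^{(k)}·b = Σ_{k₀+k₁+k₂=k} (-1)^{k₀} D^{(k₀)}_B D^{(k₁)}_x D^{(k₂)}_y b for all k ≥ 1) if and only if its coefficients satisfy D^{(k)} · b_{i,j} = Σ_{p+q=k} binom(p+i,i) binom(q+j,j) b_{p+i, q+j} for all k, i, j ≥ 0. -/

import Mathlib

open Finset


open Finset


open Finset

private lemma altsum (a i : ℕ) :
    ∑ p ∈ range (a + 1), ((-1 : ℂ) ^ p * ((i + a).choose p : ℂ) * ((i + a - p).choose i : ℂ))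
      = if a = 0 then 1 else 0 := by
  have key : ∀ p ∈ range (a + 1),
      ((-1 : ℂ) ^ p * ((i + a).choose p : ℂ) * ((i + a - p).choose i : ℂ))
        = ((i + a).choose a : ℂ) * ((-1) ^ p * (a.choose p : ℂ)) := by
    intro p hp
    rw [mem_range] at hp
    have hpa : p ≤ a := by omega
    have h1 : (i + a).choose a * a.choose p = (i + a).choose p * (i + a - p).choose (a - p) :=
      Nat.choose_mul (by omega)
    have h2 : (i + a - p).choose (a - p) = (i + a - p).choose i :=
      Nat.choose_symm_of_eq_add (by omega)
    have h3 : (i + a).choose p * (i + a - p).choose i = (i + a).choose a * a.choose p := by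
      rw [h1, h2]
    have h3' : (((i + a).choose p : ℂ)) * ((i + a - p).choose i : ℂ)
        = ((i + a).choose a : ℂ) * (a.choose p : ℂ) := by exact_mod_cast congrArg (Nat.cast (R := ℂ)) h3
    linear_combination ((-1 : ℂ) ^ p) * h3'
  rw [Finset.sum_congr rfl key, ← Finset.mul_sum]
  have h4 : (∑ p ∈ range (a + 1), ((-1 : ℂ) ^ p * (a.choose p : ℂ)))
      = if a = 0 then 1 else 0 := by
    have := Int.alternating_sum_range_choose (n := a)
    have := congrArg (fun z : ℤ => (z : ℂ)) this
    push_cast at this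
    exact this
  rw [h4]
  split_ifs with h
  · subst h; simp
  · ring

open Finset

private lemma reindex {M : Type*} [AddCommMonoid M] (k : ℕ) (g : ℕ → ℕ → ℕ → ℕ → M) :
    ∑ k₀ ∈ range (k + 1), ∑ k₁ ∈ range (k - k₀ + 1), ∑ p ∈ range (k₀ + 1),
        g p (k₀ - p) k₁ (k - k₀ - k₁)
      = ∑ a ∈ range (k + 1), ∑ p ∈ range (a + 1), ∑ q ∈ range (k - a + 1),
          g p q (a - p) (k - a - q) := by
  rw [Finset.sum_sigma', Finset.sum_sigma', Finset.sum_sigma', Finset.sum_sigma']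
  refine Finset.sum_nbij' (fun x => ⟨⟨x.2 + x.1.2, x.2⟩, x.1.1 - x.2⟩)
    (fun y => ⟨⟨y.1.2 + y.2, y.1.1 - y.1.2⟩, y.1.2⟩) ?_ ?_ ?_ ?_ ?_
  · rintro ⟨⟨k₀, k₁⟩, p⟩ h
    simp only [mem_sigma, mem_range] at h ⊢
    omega
  · rintro ⟨⟨a, p⟩, q⟩ h
    simp only [mem_sigma, mem_range] at h ⊢
    omega
  · rintro ⟨⟨k₀, k₁⟩, p⟩ h
    simp only [mem_sigma, mem_range] at h
    simp only [Sigma.ext_iff, heq_eq_eq, and_true]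
    omega
  · rintro ⟨⟨a, p⟩, q⟩ h
    simp only [mem_sigma, mem_range] at h
    simp only [Sigma.ext_iff, heq_eq_eq, and_true]
    omega
  · rintro ⟨⟨k₀, k₁⟩, p⟩ h
    simp only [mem_sigma, mem_range] at h
    have e1 : p + k₁ - p = k₁ := by omega
    have e2 : k - (p + k₁) - (k₀ - p) = k - k₀ - k₁ := by omega
    simp only [e1, e2]


private lemma star {B : Type*} [AddCommGroup B] [Module ℂ B] (b : ℕ → ℕ → B)
    (k : ℕ) (hk : 1 ≤ k) (i j : ℕ) :
    ∑ k₀ ∈ range (k + 1), ∑ k₁ ∈ range (k - k₀ + 1),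
      ((-1 : ℂ) ^ k₀ * ((i + k₁).choose k₁ : ℂ) *
        ((j + (k - k₀ - k₁)).choose (k - k₀ - k₁) : ℂ)) •
          (∑ p ∈ Finset.range (k₀ + 1),
            (((p + (i + k₁)).choose (i + k₁) : ℂ) *
              (((k₀ - p) + (j + (k - k₀ - k₁))).choose (j + (k - k₀ - k₁)) : ℂ)) •
                b (p + (i + k₁)) ((k₀ - p) + (j + (k - k₀ - k₁)))) = 0 := by
  -- the generic quadruple-indexed term
  set g : ℕ → ℕ → ℕ → ℕ → B := fun p q k₁ k₂ =>
    ((-1 : ℂ) ^ (p + q) * ((i + k₁).choose k₁ : ℂ) * ((j + k₂).choose k₂ : ℂ) *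
      ((p + (i + k₁)).choose (i + k₁) : ℂ) * ((q + (j + k₂)).choose (j + k₂) : ℂ)) •
        b (p + (i + k₁)) (q + (j + k₂)) with hg
  have step1 : ∑ k₀ ∈ range (k + 1), ∑ k₁ ∈ range (k - k₀ + 1),
      ((-1 : ℂ) ^ k₀ * ((i + k₁).choose k₁ : ℂ) *
        ((j + (k - k₀ - k₁)).choose (k - k₀ - k₁) : ℂ)) •
          (∑ p ∈ Finset.range (k₀ + 1),
            (((p + (i + k₁)).choose (i + k₁) : ℂ) *
              (((k₀ - p) + (j + (k - k₀ - k₁))).choose (j + (k - k₀ - k₁)) : ℂ)) •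
                b (p + (i + k₁)) ((k₀ - p) + (j + (k - k₀ - k₁))))
      = ∑ k₀ ∈ range (k + 1), ∑ k₁ ∈ range (k - k₀ + 1), ∑ p ∈ range (k₀ + 1),
          g p (k₀ - p) k₁ (k - k₀ - k₁) := by
    refine Finset.sum_congr rfl fun k₀ hk₀ => Finset.sum_congr rfl fun k₁ hk₁ => ?_
    rw [Finset.smul_sum]
    refine Finset.sum_congr rfl fun p hp => ?_
    rw [mem_range] at hk₀ hk₁ hp
    rw [smul_smul, hg]
    have e1 : p + (k₀ - p) = k₀ := by omega
    simp only [e1]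
    ring_nf
  rw [step1, reindex]
  have step3 : ∀ a ∈ range (k + 1),
      ∑ p ∈ range (a + 1), ∑ q ∈ range (k - a + 1), g p q (a - p) (k - a - q)
        = (((if a = 0 then 1 else 0) * (if k - a = 0 then 1 else 0)) : ℂ) •
            b (i + a) (j + (k - a)) := by
    intro a ha
    rw [mem_range] at ha
    set c := k - a with hc
    have hterm : ∀ p ∈ range (a + 1), ∀ q ∈ range (c + 1),
        g p q (a - p) (c - q)
          = (((-1 : ℂ) ^ p * ((i + a).choose p : ℂ) * ((i + a - p).choose i : ℂ)) *
              ((-1 : ℂ) ^ q * ((j + c).choose q : ℂ) * ((j + c - q).choose j : ℂ))) •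
                b (i + a) (j + c) := by
      intro p hp q hq
      rw [mem_range] at hp hq
      rw [hg]
      have e1 : i + (a - p) = i + a - p := by omega
      have e2 : p + (i + a - p) = i + a := by omega
      have e3 : j + (c - q) = j + c - q := by omega
      have e4 : q + (j + c - q) = j + c := by omega
      simp only [e1, e2, e3, e4]
      have s1 : (i + a).choose (i + a - p) = (i + a).choose p :=
        Nat.choose_symm_of_eq_add (by omega)
      have s2 : (i + a - p).choose (a - p) = (i + a - p).choose i :=
        Nat.choose_symm_of_eq_add (by omega)
      have s3 : (j + c).choose (j + c - q) = (j + c).choose q :=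
        Nat.choose_symm_of_eq_add (by omega)
      have s4 : (j + c - q).choose (c - q) = (j + c - q).choose j :=
        Nat.choose_symm_of_eq_add (by omega)
      rw [s1, s2, s3, s4, pow_add]
      congr 1
      ring
    calc ∑ p ∈ range (a + 1), ∑ q ∈ range (c + 1), g p q (a - p) (c - q)
        = ∑ p ∈ range (a + 1), ∑ q ∈ range (c + 1),
            (((-1 : ℂ) ^ p * ((i + a).choose p : ℂ) * ((i + a - p).choose i : ℂ)) *
              ((-1 : ℂ) ^ q * ((j + c).choose q : ℂ) * ((j + c - q).choose j : ℂ))) •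
                b (i + a) (j + c) := by
          exact Finset.sum_congr rfl fun p hp => Finset.sum_congr rfl fun q hq =>
            hterm p hp q hq
      _ = ((∑ p ∈ range (a + 1),
              ((-1 : ℂ) ^ p * ((i + a).choose p : ℂ) * ((i + a - p).choose i : ℂ))) *
            (∑ q ∈ range (c + 1),
              ((-1 : ℂ) ^ q * ((j + c).choose q : ℂ) * ((j + c - q).choose j : ℂ)))) •
              b (i + a) (j + c) := by
          rw [Finset.sum_mul_sum, Finset.sum_smul]
          exact Finset.sum_congr rfl fun p hp => by rw [Finset.sum_smul]
      _ = _ := by rw [altsum, altsum]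
  rw [Finset.sum_congr rfl step3]
  refine Finset.sum_eq_zero fun a ha => ?_
  rw [mem_range] at ha
  rcases Nat.eq_zero_or_pos a with h | h
  · subst h
    have h2 : ¬(k - 0 = 0) := by omega
    rw [if_pos rfl, if_neg h2, mul_zero, zero_smul]
  · have h2 : ¬(a = 0) := by omega
    simp [h2]


/-- A power series `Σ b_{i,j} x^i y^j ∈ B[[x,y]]` (given by its coefficient family `b`)
over a `ℂ[T]`-module `B` with divided-power operators `D^{(k)}` (satisfying `D^{(0)} = 1`
and `D^{(p)} ∘ D^{(q)} = binom(p+q,p) D^{(p+q)}`) is `G`-invariant — i.e. annihilated by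
the action `D^{(k)}·b = Σ_{k₀+k₁+k₂=k} (-1)^{k₀} D^{(k₀)}_B D^{(k₁)}_x D^{(k₂)}_y b`
for all `k ≥ 1` — if and only if its coefficients satisfy
`D^{(k)} · b_{i,j} = Σ_{p+q=k} binom(p+i,i) binom(q+j,j) b_{p+i, q+j}` for all `k, i, j ≥ 0`. -/
theorem invariant_iff_coeff_relations
    (B : Type*) [AddCommGroup B] [Module ℂ B]
    (Dop : ℕ → B →ₗ[ℂ] B)
    (hD0 : Dop 0 = LinearMap.id)
    (hDcomp : ∀ p q : ℕ, Dop p ∘ₗ Dop q = ((p + q).choose p : ℂ) • Dop (p + q))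
    (b : ℕ → ℕ → B) :
    (∀ k : ℕ, 1 ≤ k → ∀ i j : ℕ,
      ∑ k₀ ∈ Finset.range (k + 1), ∑ k₁ ∈ Finset.range (k - k₀ + 1),
        ((-1 : ℂ) ^ k₀ * ((i + k₁).choose k₁ : ℂ) *
          ((j + (k - k₀ - k₁)).choose (k - k₀ - k₁) : ℂ)) •
            Dop k₀ (b (i + k₁) (j + (k - k₀ - k₁))) = 0)
    ↔
    (∀ k i j : ℕ, Dop k (b i j) =
      ∑ p ∈ Finset.range (k + 1),
        (((p + i).choose i : ℂ) * (((k - p) + j).choose j : ℂ)) • b (p + i) ((k - p) + j)) := by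
  constructor
  · intro hS k
    induction k using Nat.strong_induction_on with
    | _ k IH =>
      intro i j
      rcases Nat.eq_zero_or_pos k with hk0 | hk0
      · subst hk0
        rw [hD0]
        simp
      · have h1 := hS k hk0 i j
        have h2 := star b k hk0 i j
        rw [Finset.sum_range_succ] at h1 h2
        have h3 : ∑ k₀ ∈ Finset.range k, ∑ k₁ ∈ Finset.range (k - k₀ + 1),
            ((-1 : ℂ) ^ k₀ * ((i + k₁).choose k₁ : ℂ) *
              ((j + (k - k₀ - k₁)).choose (k - k₀ - k₁) : ℂ)) •
                Dop k₀ (b (i + k₁) (j + (k - k₀ - k₁)))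
            = ∑ k₀ ∈ Finset.range k, ∑ k₁ ∈ Finset.range (k - k₀ + 1),
                ((-1 : ℂ) ^ k₀ * ((i + k₁).choose k₁ : ℂ) *
                  ((j + (k - k₀ - k₁)).choose (k - k₀ - k₁) : ℂ)) •
                    (∑ p ∈ Finset.range (k₀ + 1),
                      (((p + (i + k₁)).choose (i + k₁) : ℂ) *
                        (((k₀ - p) + (j + (k - k₀ - k₁))).choose (j + (k - k₀ - k₁)) : ℂ)) •
                          b (p + (i + k₁)) ((k₀ - p) + (j + (k - k₀ - k₁)))) := by
          refine Finset.sum_congr rfl fun k₀ hk₀ => Finset.sum_congr rfl fun k₁ _ => ?_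
          rw [IH k₀ (Finset.mem_range.mp hk₀) (i + k₁) (j + (k - k₀ - k₁))]
        rw [h3] at h1
        have h5 := add_left_cancel (h1.trans h2.symm)
        simp only [Nat.sub_self, Nat.sub_zero, Finset.sum_range_one, add_zero,
          Nat.choose_zero_right, Nat.cast_one, mul_one] at h5
        have hne : ((-1 : ℂ) ^ k) ≠ 0 := pow_ne_zero _ (neg_ne_zero.mpr one_ne_zero)
        have h6 := congrArg (fun v : B => ((-1 : ℂ) ^ k)⁻¹ • v) h5
        simpa [inv_smul_smul₀ hne] using h6
  · intro hR k hk i j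
    have h2 := star b k hk i j
    rw [← h2]
    refine Finset.sum_congr rfl fun k₀ _ => Finset.sum_congr rfl fun k₁ _ => ?_
    rw [hR k₀ (i + k₁) (j + (k - k₀ - k₁))]
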